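/- Let A be a unital Banach algebra, and let a, b ∈ A satisfy ab = 1 and ba ≠ 1, with a ≠ 0. Then for every ζ ∈ ℂ with |ζ| < 1/‖a‖, ζ belongs to the spectrum of b. -/
import Mathlib


/-- Let `A` be a unital Banach algebra and `a, b ∈ A` with `a * b = 1`, `b * a ≠ 1`, and
`a ≠ 0`. Then every `ζ ∈ ℂ` with `|ζ| < 1 / ‖a‖` belongs to the spectrum of `b`. -/
theorem disc_subset_spectrum_of_one_sided_inverse
    {A : Type*} [NormedRing A] [NormedAlgebra ℂ A] [CompleteSpace A]
    (a b : A) (hab : a * b = 1) (hba : b * a ≠ 1) (ha : a ≠ 0) :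
    ∀ ζ : ℂ, ‖ζ‖ < 1 / ‖a‖ → ζ ∈ spectrum ℂ b := by
  intro ζ hζ
  rw [spectrum.mem_iff]
  intro hu
  have hapos : (0 : ℝ) < ‖a‖ := norm_pos_iff.mpr ha
  have hnorm : ‖ζ • a‖ < 1 := by
    calc ‖ζ • a‖ ≤ ‖ζ‖ * ‖a‖ := norm_smul_le ζ a
    _ < 1 := (lt_div_iff₀ hapos).mp hζ
  let v : Aˣ := Units.oneSub (ζ • a) hnorm
  have hv : (v : A) = 1 - ζ • a := rfl
  have hav : a * (algebraMap ℂ A ζ - b) = -(v : A) := by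
    have h2 : a * algebraMap ℂ A ζ = ζ • a := by
      rw [Algebra.algebraMap_eq_smul_one, mul_smul_comm, mul_one]
    rw [hv, mul_sub, h2, hab, neg_sub]
  obtain ⟨u, huu⟩ := hu
  have hA : IsUnit a := by
    have h1 : a = (-(v : A)) * ((u⁻¹ : Aˣ) : A) := by
      rw [← hav, ← huu, mul_assoc, u.mul_inv, mul_one]
    rw [h1]
    exact ((-v).isUnit).mul (u⁻¹).isUnit
  obtain ⟨w, hw⟩ := hA
  apply hba
  have hwb : (w : A) * b = 1 := by rw [hw, hab]
  have hb : b = ((w⁻¹ : Aˣ) : A) := by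
    rw [← one_mul b, ← w.inv_mul, mul_assoc, hwb, mul_one]
  rw [hb, ← hw, w.inv_mul]
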